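/- arXiv:0911.0932 — 4 statements merged into one kernel-verified Lean document; each statement's English description precedes it below -/
import Mathlib

section
/- The function Q(x) = (3/2) / cosh²(x/2) satisfies the ODE Q'' + Q² = Q on ℝ. -/
noncomputable def Q (x : ℝ) : ℝ := (3/2) / (Real.cosh (x/2))^2

lemma cosh_ne (x : ℝ) : Real.cosh x ≠ 0 := ne_of_gt (Real.cosh_pos x)

lemma hasDerivAt_c (x : ℝ) : HasDerivAt (fun y : ℝ => Real.cosh (y/2)) (Real.sinh (x/2) / 2) x := by
  simpa [div_eq_mul_inv, Function.comp_def] using (Real.hasDerivAt_cosh (x/2)).comp x ((hasDerivAt_id x).div_const 2)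

lemma hasDerivAt_Q (x : ℝ) :
    HasDerivAt Q (-(3/2) * Real.sinh (x/2) / (Real.cosh (x/2))^3) x := by
  have h := (hasDerivAt_const x (3/2:ℝ)).fun_div ((hasDerivAt_c x).fun_pow 2)
    (pow_ne_zero 2 (cosh_ne _))
  refine h.congr_deriv ?_
  field_simp
  ring

lemma hasDerivAt_Q' (x : ℝ) :
    HasDerivAt (fun y => -(3/2) * Real.sinh (y/2) / (Real.cosh (y/2))^3)
      (-(3/4) * (3 - 2 * (Real.cosh (x/2))^2) / (Real.cosh (x/2))^4) x := by
  have hs : HasDerivAt (fun y : ℝ => Real.sinh (y/2)) (Real.cosh (x/2) / 2) x := by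
    simpa [div_eq_mul_inv, Function.comp_def] using (Real.hasDerivAt_sinh (x/2)).comp x ((hasDerivAt_id x).div_const 2)
  have h := ((hs.const_mul (-(3/2):ℝ)).fun_div ((hasDerivAt_c x).fun_pow 3)
    (pow_ne_zero 3 (cosh_ne _)))
  refine h.congr_deriv ?_
  have h2 : (Real.sinh (x/2))^2 = (Real.cosh (x/2))^2 - 1 := by
    have := Real.cosh_sq_sub_sinh_sq (x/2)
    linarith
  field_simp
  linear_combination (12 * Real.cosh (x/2)^2) * h2

theorem Q_ode (x : ℝ) : deriv (deriv Q) x + (Q x)^2 = Q x := by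
  have hd : deriv Q = fun y => -(3/2) * Real.sinh (y/2) / (Real.cosh (y/2))^3 := by
    funext y; exact (hasDerivAt_Q y).deriv
  rw [hd, (hasDerivAt_Q' x).deriv]
  unfold Q
  have h := cosh_ne (x/2)
  field_simp
  ring
end

section
/- 10 ∫ℝ e^{−x} Q(x)³ dx = 9 ∫ℝ e^{−x} Q(x)² dx, where Q(x) = (3/2)/cosh²(x/2). -/
open MeasureTheory Real Filter Topology

lemma exp_abs_le_two_cosh (y : ℝ) : Real.exp |y| ≤ 2 * Real.cosh y := by
  rw [Real.cosh_eq]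
  rcases abs_cases y with ⟨h, _⟩ | ⟨h, _⟩ <;> rw [h] <;>
    nlinarith [(Real.exp_pos y).le, (Real.exp_pos (-y)).le]

lemma Q_nonneg (x : ℝ) : 0 ≤ Q x := by
  rw [Q]; positivity

lemma Q_le (x : ℝ) : Q x ≤ 6 * Real.exp (-|x|) := by
  have hc := Real.cosh_pos (x/2)
  have h : Real.exp (|x|/2) ≤ 2 * Real.cosh (x/2) := by
    have := exp_abs_le_two_cosh (x/2)
    rwa [abs_div, abs_two] at this
  have e2 : Real.exp |x| = Real.exp (|x|/2) ^ 2 := by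
    rw [sq, ← Real.exp_add, add_halves]
  have h2 : Real.exp |x| ≤ 4 * Real.cosh (x/2) ^ 2 := by
    rw [e2]; nlinarith [(Real.exp_pos (|x|/2)).le]
  have hE := (Real.exp_pos (-|x|)).le
  have hEE : Real.exp (-|x|) * Real.exp |x| = 1 := by
    rw [← Real.exp_add]; simp
  rw [Q, div_le_iff₀ (by positivity)]
  nlinarith [mul_le_mul_of_nonneg_left h2 hE]

lemma integrable_exp_neg_abs : Integrable (fun x : ℝ => Real.exp (-|x|)) := by
  have h1 : IntegrableOn (fun x : ℝ => Real.exp (-|x|)) (Set.Iic 0) := by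
    refine (integrableOn_exp_Iic 0).congr_fun ?_ measurableSet_Iic
    intro x hx
    simp only [Set.mem_Iic] at hx
    simp [abs_of_nonpos hx]
  have h2 : IntegrableOn (fun x : ℝ => Real.exp (-|x|)) (Set.Ioi 0) := by
    refine (exp_neg_integrableOn_Ioi 0 (by norm_num : (0:ℝ) < 1)).congr_fun ?_ measurableSet_Ioi
    intro x hx
    simp only [Set.mem_Ioi] at hx
    simp [abs_of_pos hx]
  have := h1.union h2
  rwa [Set.Iic_union_Ioi, integrableOn_univ] at this

lemma continuous_Q : Continuous Q := by
  apply continuous_const.div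
  · exact (Real.continuous_cosh.comp (continuous_id.div_const 2)).pow 2
  · intro x; positivity

lemma integrable_Q2 : Integrable (fun x : ℝ => Real.exp (-x) * Q x ^ 2) := by
  refine Integrable.mono' (g := fun x : ℝ => 36 * Real.exp (-|x|))
    (integrable_exp_neg_abs.const_mul 36) ?_ ?_
  · exact ((Real.continuous_exp.comp continuous_neg).mul (continuous_Q.pow 2)).aestronglyMeasurable
  · filter_upwards with x
    have hQ0 := Q_nonneg x
    have hQ := Q_le x
    have hE := (Real.exp_pos (-x)).le
    rw [Real.norm_eq_abs, abs_of_nonneg (mul_nonneg hE (pow_nonneg hQ0 2))]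
    have step1 : Real.exp (-x) * Q x ^ 2 ≤ Real.exp (-x) * (6 * Real.exp (-|x|))^2 := by
      gcongr
    have step2 : Real.exp (-x) * (6 * Real.exp (-|x|))^2 = 36 * Real.exp (-x + -|x| + -|x|) := by
      rw [Real.exp_add, Real.exp_add]; ring
    have step3 : Real.exp (-x + -|x| + -|x|) ≤ Real.exp (-|x|) := by
      apply Real.exp_le_exp.mpr
      have := neg_abs_le x
      have := le_abs_self x
      linarith
    calc Real.exp (-x) * Q x ^ 2 ≤ 36 * Real.exp (-x + -|x| + -|x|) := by rw [← step2]; exact step1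
      _ ≤ 36 * Real.exp (-|x|) := by linarith

lemma integrable_Q3 : Integrable (fun x : ℝ => Real.exp (-x) * Q x ^ 3) := by
  refine Integrable.mono' (g := fun x : ℝ => 216 * Real.exp (-|x|))
    (integrable_exp_neg_abs.const_mul 216) ?_ ?_
  · exact ((Real.continuous_exp.comp continuous_neg).mul (continuous_Q.pow 3)).aestronglyMeasurable
  · filter_upwards with x
    have hQ0 := Q_nonneg x
    have hQ := Q_le x
    have hE := (Real.exp_pos (-x)).le
    rw [Real.norm_eq_abs, abs_of_nonneg (mul_nonneg hE (pow_nonneg hQ0 3))]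
    have step1 : Real.exp (-x) * Q x ^ 3 ≤ Real.exp (-x) * (6 * Real.exp (-|x|))^3 := by
      gcongr
    have step2 : Real.exp (-x) * (6 * Real.exp (-|x|))^3
        = 216 * Real.exp (-x + -|x| + -|x| + -|x|) := by
      rw [Real.exp_add, Real.exp_add, Real.exp_add]; ring
    have step3 : Real.exp (-x + -|x| + -|x| + -|x|) ≤ Real.exp (-|x|) := by
      apply Real.exp_le_exp.mpr
      have := neg_abs_le x
      have := le_abs_self x
      have := abs_nonneg x
      linarith
    calc Real.exp (-x) * Q x ^ 3 ≤ 216 * Real.exp (-x + -|x| + -|x| + -|x|) := by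
          rw [← step2]; exact step1
      _ ≤ 216 * Real.exp (-|x|) := by linarith

noncomputable def F (x : ℝ) : ℝ :=
  (27/2 : ℝ) * (2 * Real.tanh (x/2) - 2 * Real.tanh (x/2)^2 - Real.tanh (x/2)^3
    + (5/2) * Real.tanh (x/2)^4 - Real.tanh (x/2)^5)

lemma tanh_half_hasDerivAt (x : ℝ) :
    HasDerivAt (fun y : ℝ => Real.tanh (y/2)) (1 / (2 * Real.cosh (x/2)^2)) x := by
  have hc : Real.cosh (x/2) ≠ 0 := (Real.cosh_pos _).ne'
  have hs : HasDerivAt (fun y : ℝ => y/2) (1/2) x := (hasDerivAt_id x).div_const 2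
  have h1 : HasDerivAt (fun y : ℝ => Real.sinh (y/2)) (Real.cosh (x/2) * (1/2)) x :=
    hs.sinh
  have h2 : HasDerivAt (fun y : ℝ => Real.cosh (y/2)) (Real.sinh (x/2) * (1/2)) x :=
    hs.cosh
  have h3 : HasDerivAt (fun y : ℝ => Real.sinh (y/2) / Real.cosh (y/2)) _ x := h1.div h2 hc
  have heq : (fun y : ℝ => Real.sinh (y/2) / Real.cosh (y/2)) = fun y : ℝ => Real.tanh (y/2) := by
    funext y; rw [Real.tanh_eq_sinh_div_cosh]
  rw [heq] at h3
  convert h3 using 1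
  have hsq := Real.cosh_sq_sub_sinh_sq (x/2)
  field_simp
  linear_combination -hsq

lemma alg_key (s c e : ℝ) (hc : c ≠ 0) (h1 : c^2 - s^2 = 1) (he : e = (c - s)^2) :
    10 * (e * ((3/2)/c^2)^3) - 9 * (e * ((3/2)/c^2)^2)
      = 27/2 * (2*(1/(2*c^2)) - 2*((2:ℝ) * (s/c)^1 * (1/(2*c^2))) - (3:ℝ)*(s/c)^2*(1/(2*c^2))
        + 5/2*((4:ℝ)*(s/c)^3*(1/(2*c^2))) - (5:ℝ)*(s/c)^4*(1/(2*c^2))) := by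
  subst he
  field_simp
  linear_combination (-270*(c-s)^2) * h1

lemma F_hasDerivAt (x : ℝ) :
    HasDerivAt F (10 * (Real.exp (-x) * Q x ^ 3) - 9 * (Real.exp (-x) * Q x ^ 2)) x := by
  have ht := tanh_half_hasDerivAt x
  have hF := (((((ht.const_mul (2:ℝ)).sub ((ht.pow 2).const_mul (2:ℝ))).sub (ht.pow 3)).add
    ((ht.pow 4).const_mul ((5:ℝ)/2))).sub (ht.pow 5)).const_mul ((27:ℝ)/2)
  have hF' : HasDerivAt F _ x := hF
  convert hF' using 1
  have hc : Real.cosh (x/2) ≠ 0 := (Real.cosh_pos _).ne'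
  have hsq := Real.cosh_sq_sub_sinh_sq (x/2)
  have hexp : Real.exp (-x) = (Real.cosh (x/2) - Real.sinh (x/2))^2 := by
    rw [Real.cosh_sub_sinh, sq, ← Real.exp_add]
    congr 1; ring
  have key := alg_key (Real.sinh (x/2)) (Real.cosh (x/2)) (Real.exp (-x)) hc hsq hexp
  rw [Real.tanh_eq_sinh_div_cosh, Q]
  push_cast
  linear_combination key

lemma tanh_half_eq (x : ℝ) :
    Real.tanh (x/2) = (1 - Real.exp (-x)) / (1 + Real.exp (-x)) := by
  have hu : Real.exp (-x) = Real.exp (-(x/2)) * Real.exp (-(x/2)) := by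
    rw [← Real.exp_add]; congr 1; ring
  have huv : Real.exp (x/2) * Real.exp (-(x/2)) = 1 := by
    rw [← Real.exp_add]; simp
  rw [Real.tanh_eq_sinh_div_cosh, Real.sinh_eq, Real.cosh_eq, hu]
  rw [div_eq_div_iff (by positivity) (by positivity)]
  linear_combination Real.exp (-(x/2)) * huv

lemma tendsto_tanh_half_atTop : Tendsto (fun x : ℝ => Real.tanh (x/2)) atTop (𝓝 1) := by
  have h : Tendsto (fun x : ℝ => Real.exp (-x)) atTop (𝓝 0) :=
    Real.tendsto_exp_neg_atTop_nhds_zero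
  have h2 : Tendsto (fun x : ℝ => (1 - Real.exp (-x)) / (1 + Real.exp (-x))) atTop
      (𝓝 ((1 - 0) / (1 + 0))) :=
    (tendsto_const_nhds.sub h).div (tendsto_const_nhds.add h) (by norm_num)
  norm_num at h2
  exact h2.congr fun x => (tanh_half_eq x).symm

lemma tendsto_tanh_half_atBot : Tendsto (fun x : ℝ => Real.tanh (x/2)) atBot (𝓝 (-1)) := by
  have h := (tendsto_tanh_half_atTop.comp tendsto_neg_atBot_atTop).neg
  rw [show -(1:ℝ) = -1 from rfl] at h
  refine h.congr fun x => ?_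
  show -Real.tanh (-x/2) = Real.tanh (x/2)
  rw [show -x/2 = -(x/2) by ring, Real.tanh_neg, neg_neg]

theorem exp_weighted_integrals :
    10 * (∫ x : ℝ, Real.exp (-x) * (Q x)^3) = 9 * ∫ x : ℝ, Real.exp (-x) * (Q x)^2 := by
  have h3 := integrable_Q3
  have h2 := integrable_Q2
  have hint : Integrable (fun x : ℝ =>
      10 * (Real.exp (-x) * Q x ^ 3) - 9 * (Real.exp (-x) * Q x ^ 2)) :=
    (h3.const_mul 10).sub (h2.const_mul 9)
  have hcont : Continuous fun t : ℝ =>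
      (27/2 : ℝ) * (2*t - 2*t^2 - t^3 + (5/2)*t^4 - t^5) := by continuity
  have hbot : Tendsto F atBot (𝓝 (27/4)) := by
    have h := (hcont.tendsto (-1)).comp tendsto_tanh_half_atBot
    have : (27/2 : ℝ) * (2*(-1) - 2*(-1)^2 - (-1)^3 + (5/2)*(-1)^4 - (-1)^5) = 27/4 := by
      norm_num
    rw [this] at h
    exact h
  have htop : Tendsto F atTop (𝓝 (27/4)) := by
    have h := (hcont.tendsto 1).comp tendsto_tanh_half_atTop
    have : (27/2 : ℝ) * (2*1 - 2*1^2 - 1^3 + (5/2)*1^4 - 1^5) = 27/4 := by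
      norm_num
    rw [this] at h
    exact h
  have key := integral_of_hasDerivAt_of_tendsto F_hasDerivAt hint hbot htop
  rw [integral_sub (h3.const_mul 10) (h2.const_mul 9),
    integral_const_mul, integral_const_mul] at key
  simp only [sub_self] at key
  linarith
end

section
/- With L f = −f'' + f − 2Q f, the function Q'/Q satisfies L(Q'/Q) = −(5/3) Q' + Q'/Q, and consequently (L(Q'/Q))' = −2Q + (5/3) Q². -/
noncomputable def L (f : ℝ → ℝ) (x : ℝ) : ℝ :=
  -deriv (deriv f) x + f x - 2 * Q x * f x

noncomputable def Q1 (x : ℝ) : ℝ := (-(3/2) * Real.sinh (x/2)) / (Real.cosh (x/2))^3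

lemma cpos (x : ℝ) : 0 < Real.cosh (x/2) := Real.cosh_pos _

lemma Qpos (x : ℝ) : 0 < Q x := by
  have := cpos x
  unfold Q; positivity

lemma hHalf (x : ℝ) : HasDerivAt (fun y : ℝ => y / 2) (1/2 : ℝ) x := by
  simpa using (hasDerivAt_id x).div_const 2

lemma hCosh (x : ℝ) : HasDerivAt (fun y : ℝ => Real.cosh (y/2)) (Real.sinh (x/2) * (1/2)) x :=
  (Real.hasDerivAt_cosh _).comp x (hHalf x)

lemma hSinh (x : ℝ) : HasDerivAt (fun y : ℝ => Real.sinh (y/2)) (Real.cosh (x/2) * (1/2)) x :=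
  (Real.hasDerivAt_sinh _).comp x (hHalf x)

lemma hQ (x : ℝ) : HasDerivAt Q (Q1 x) x := by
  have h3 : HasDerivAt (fun y : ℝ => (Real.cosh (y/2))^2)
      ((2:ℕ) * (Real.cosh (x/2))^1 * (Real.sinh (x/2) * (1/2))) x := (hCosh x).pow 2
  have h4 : HasDerivAt Q
      ((0 * (Real.cosh (x/2))^2 - (3/2) * ((2:ℕ) * (Real.cosh (x/2))^1 * (Real.sinh (x/2) * (1/2)))) /
        ((Real.cosh (x/2))^2)^2) x :=
    (hasDerivAt_const x (3/2 : ℝ)).div h3 (by positivity)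
  convert h4 using 1
  have hc := (cpos x).ne'
  unfold Q1
  field_simp
  ring

lemma hQ1 (x : ℝ) : HasDerivAt Q1 (Q x - (Q x)^2) x := by
  have hc := (cpos x).ne'
  have hn : HasDerivAt (fun y : ℝ => -(3/2) * Real.sinh (y/2))
      (-(3/2) * (Real.cosh (x/2) * (1/2))) x := (hSinh x).const_mul _
  have hd : HasDerivAt (fun y : ℝ => (Real.cosh (y/2))^3)
      ((3:ℕ) * (Real.cosh (x/2))^2 * (Real.sinh (x/2) * (1/2))) x := (hCosh x).pow 3
  have h := hn.div hd (by positivity)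
  refine h.congr_deriv ?_; symm
  have hs : Real.sinh (x/2)^2 = Real.cosh (x/2)^2 - 1 := Real.sinh_sq _
  unfold Q
  field_simp
  linear_combination (-3) * hs

lemma hdQ : deriv Q = Q1 := funext fun x => (hQ x).deriv

lemma hg (x : ℝ) : HasDerivAt (fun y => Q1 y / Q y) (-(1/3) * Q x) x := by
  have h := (hQ1 x).div (hQ x) (Qpos x).ne'
  refine h.congr_deriv ?_; symm
  have hc := (cpos x).ne'
  have hs : Real.sinh (x/2)^2 = Real.cosh (x/2)^2 - 1 := Real.sinh_sq _
  have hQne := (Qpos x).ne'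
  unfold Q Q1
  field_simp
  linear_combination 2 * hs

lemma hdg : deriv (fun y => Q1 y / Q y) = fun x => -(1/3) * Q x :=
  funext fun x => (hg x).deriv

theorem L_of_Q'_over_Q :
    (∀ x : ℝ, L (fun y => deriv Q y / Q y) x = -(5/3) * deriv Q x + deriv Q x / Q x) ∧
    (∀ x : ℝ, deriv (L (fun y => deriv Q y / Q y)) x = -2 * Q x + (5/3) * (Q x)^2) := by
  have hfun : (fun y => deriv Q y / Q y) = fun y => Q1 y / Q y := by
    funext y; rw [hdQ]
  have hdd : deriv (deriv (fun y => Q1 y / Q y)) = fun x => -(1/3) * Q1 x := by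
    rw [hdg]
    exact funext fun x => ((hQ x).const_mul (-(1/3))).deriv
  have part1 : ∀ x : ℝ, L (fun y => deriv Q y / Q y) x = -(5/3) * deriv Q x + deriv Q x / Q x := by
    intro x
    unfold L
    rw [hdQ, hdd]
    have hQne := (Qpos x).ne'
    simp only
    field_simp
    ring
  refine ⟨part1, fun x => ?_⟩
  have hLfun : L (fun y => deriv Q y / Q y) = fun x => -(5/3) * Q1 x + Q1 x / Q x := by
    funext y
    rw [part1 y, hdQ]
  rw [hLfun]
  have h : HasDerivAt (fun x => -(5/3) * Q1 x + Q1 x / Q x)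
      (-(5/3) * (Q x - (Q x)^2) + -(1/3) * Q x) x :=
    ((hQ1 x).const_mul (-(5/3))).add (hg x)
  rw [h.deriv]
  ring
end

section
/- For λ ∈ [0,1), the mass M(Q_μ) = ∫ℝ [λ (Q_μ')² + Q_μ²] equals (1/5)(∫ℝ Q²)(1+μ)^{3/2}(1+λμ)^{−1/2}(5 + λ(1+6μ)), and d/dμ M(Q_μ) = (1/10)(∫ℝ Q²)(1+μ)^{1/2}(1+λμ)^{−3/2}(15(1−λ)² + 8λ(1+μ)(5(1−λ)+3λ(1+μ))) > 0 for all μ > −1. -/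
open Real MeasureTheory Filter Set Topology

noncomputable def Qmu (l μ : ℝ) (x : ℝ) : ℝ :=
  (1 + μ) * Q (Real.sqrt ((1 + μ) / (1 + l * μ)) * x)

noncomputable def M (l μ : ℝ) : ℝ :=
  ∫ x : ℝ, (l * (deriv (Qmu l μ) x)^2 + (Qmu l μ x)^2)

namespace MassAux


noncomputable def T (x : ℝ) : ℝ := Real.sinh x / Real.cosh x

noncomputable def Q' (x : ℝ) : ℝ := -(3/2) * Real.sinh (x/2) / (Real.cosh (x/2))^3

lemma one_sub_T_sq (x : ℝ) : 1 - T x ^ 2 = ((Real.cosh x)^2)⁻¹ := by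
  have h := Real.cosh_sq_sub_sinh_sq x
  have hc := (Real.cosh_pos x).ne'
  field_simp [T]
  unfold T
  field_simp
  linear_combination h

lemma hasDerivAt_T (x : ℝ) : HasDerivAt T (1 - T x ^ 2) x := by
  have h := (Real.hasDerivAt_sinh x).div (Real.hasDerivAt_cosh x) (Real.cosh_pos x).ne'
  convert h using 1 <;> try rfl
  rw [one_sub_T_sq]
  have h1 := Real.cosh_sq_sub_sinh_sq x
  have hc := (Real.cosh_pos x).ne'
  field_simp
  linear_combination -h1

lemma hasDerivAt_T2 (x : ℝ) : HasDerivAt (fun x => T (x/2)) ((1 - T (x/2) ^ 2)/2) x := by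
  have h := (hasDerivAt_T (x/2)).comp x ((hasDerivAt_id x).div_const 2)
  convert h using 1 <;> try rfl
  simp [div_eq_mul_inv]

lemma T_tendsto : Tendsto T atTop (𝓝 1) := by
  have h : T = fun x => 1 - 2 / (Real.exp (2*x) + 1) := by
    funext x
    have he : Real.exp (2*x) = Real.exp x * Real.exp x := by rw [two_mul, Real.exp_add]
    have h1 : (0:ℝ) < Real.exp x := Real.exp_pos x
    have h2 : (0:ℝ) < Real.exp (2*x) + 1 := by positivity
    rw [T, Real.sinh_eq, Real.cosh_eq, Real.exp_neg, he]
    have h3 : Real.exp x + (Real.exp x)⁻¹ ≠ 0 := by positivity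
    field_simp
    ring
  rw [h]
  have h4 : Tendsto (fun x : ℝ => Real.exp (2*x) + 1) atTop atTop := by
    apply Filter.tendsto_atTop_add_const_right
    exact Real.tendsto_exp_atTop.comp (tendsto_id.const_mul_atTop two_pos)
  have h5 : Tendsto (fun x : ℝ => 2 / (Real.exp (2*x) + 1)) atTop (𝓝 0) := by
    simpa [div_eq_mul_inv] using h4.inv_tendsto_atTop.const_mul (2:ℝ)
  simpa using tendsto_const_nhds.sub h5

lemma hasDerivAt_Q (x : ℝ) : HasDerivAt Q (Q' x) x := by
  have hc : HasDerivAt (fun x : ℝ => (Real.cosh (x/2))^2)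
      (2 * (Real.cosh (x/2)) ^ 1 * (Real.sinh (x/2) * (1/2))) x := by
    exact (((Real.hasDerivAt_cosh (x/2)).comp x ((hasDerivAt_id x).div_const 2)).pow 2)
  have h := (hasDerivAt_const x ((3:ℝ)/2)).div hc (by positivity)
  convert h using 1 <;> try rfl
  have hcn := (Real.cosh_pos (x/2)).ne'
  rw [Q']
  field_simp
  ring

lemma T_zero : T 0 = 0 := by simp [T]

lemma even_integral (h H : ℝ → ℝ) (L : ℝ)
    (heven : ∀ x, h (-x) = h x)
    (hd : ∀ x, HasDerivAt H (h x) x)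
    (hpos : ∀ x, 0 ≤ h x)
    (hH0 : H 0 = 0)
    (hlim : Tendsto H atTop (𝓝 L)) :
    Integrable h ∧ (∫ x, h x) = 2 * L := by
  have hIoi : IntegrableOn h (Ioi 0) :=
    integrableOn_Ioi_deriv_of_nonneg' (fun x _ => hd x) (fun x _ => hpos x) hlim
  have hint : (∫ x in Ioi (0:ℝ), h x) = L - H 0 :=
    integral_Ioi_of_hasDerivAt_of_tendsto' (fun x _ => hd x) hIoi hlim
  have hIic : IntegrableOn h (Iic 0) := by
    rw [← Measure.map_neg_eq_self (volume : Measure ℝ)]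
    have m : MeasurableEmbedding fun x : ℝ => -x := (Homeomorph.neg ℝ).measurableEmbedding
    rw [m.integrableOn_map_iff]
    simp only [Function.comp_def, heven, neg_preimage, neg_Iic, neg_zero]
    exact (integrableOn_Ici_iff_integrableOn_Ioi).mpr hIoi
  have hInt : Integrable h := by
    rw [← integrableOn_univ, ← Set.Iic_union_Ioi (a := (0:ℝ))]
    exact hIic.union hIoi
  refine ⟨hInt, ?_⟩
  have hsplit : (∫ x, h x) = (∫ x in Iic (0:ℝ), h x) + ∫ x in Ioi (0:ℝ), h x := by
    rw [← setIntegral_union (Iic_disjoint_Ioi le_rfl) measurableSet_Ioi hIic hIoi,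
      Iic_union_Ioi, setIntegral_univ]
  have hIicval : (∫ x in Iic (0:ℝ), h x) = ∫ x in Ioi (0:ℝ), h x := by
    rw [← neg_zero, ← integral_comp_neg_Iic, neg_zero]
    simp only [heven]
  rw [hsplit, hIicval, hint, hH0]
  ring

lemma Q_sq_integral : Integrable (fun x => (Q x)^2) ∧ (∫ x, (Q x)^2) = 6 := by
  have key := even_integral (fun x => (Q x)^2)
    (fun x => (9/2) * T (x/2) - (3/2) * (T (x/2))^3) 3
    (by intro x; simp [Q, neg_div, Real.cosh_neg])
    (by
      intro x
      have h := ((hasDerivAt_T2 x).const_mul ((9:ℝ)/2)).sub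
        (((hasDerivAt_T2 x).pow 3).const_mul ((3:ℝ)/2))
      convert h using 1 <;> try rfl
      have h1 := one_sub_T_sq (x/2)
      have h2 := Real.cosh_sq_sub_sinh_sq (x/2)
      have hc := (Real.cosh_pos (x/2)).ne'
      rw [h1]
      simp only [Q, T]
      norm_num
      field_simp
      linear_combination (-(9:ℝ)) * h2)
    (fun x => sq_nonneg _)
    (by simp [T_zero])
    (by
      have h2 : Tendsto (fun x : ℝ => T (x/2)) atTop (𝓝 1) :=
        T_tendsto.comp (tendsto_id.atTop_div_const two_pos)
      have := (h2.const_mul ((9:ℝ)/2)).sub ((h2.pow 3).const_mul ((3:ℝ)/2))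
      norm_num at this
      exact this)
  exact ⟨key.1, by rw [key.2]; norm_num⟩

lemma Q'_sq_integral : Integrable (fun x => (Q' x)^2) ∧ (∫ x, (Q' x)^2) = 6/5 := by
  have key := even_integral (fun x => (Q' x)^2)
    (fun x => (3/2) * (T (x/2))^3 - (9/10) * (T (x/2))^5) (3/5)
    (by intro x; simp [Q', neg_div, Real.cosh_neg, Real.sinh_neg])
    (by
      intro x
      have h := (((hasDerivAt_T2 x).pow 3).const_mul ((3:ℝ)/2)).sub
        (((hasDerivAt_T2 x).pow 5).const_mul ((9:ℝ)/10))
      convert h using 1 <;> try rfl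
      have h1 := one_sub_T_sq (x/2)
      have h2 := Real.cosh_sq_sub_sinh_sq (x/2)
      have hc := (Real.cosh_pos (x/2)).ne'
      rw [h1]
      simp only [Q', T]
      norm_num
      field_simp
      linear_combination (-(90:ℝ) * Real.sinh (x/2)^2) * h2)
    (fun x => sq_nonneg _)
    (by simp [T_zero])
    (by
      have h2 : Tendsto (fun x : ℝ => T (x/2)) atTop (𝓝 1) :=
        T_tendsto.comp (tendsto_id.atTop_div_const two_pos)
      have := ((h2.pow 3).const_mul ((3:ℝ)/2)).sub ((h2.pow 5).const_mul ((9:ℝ)/10))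
      norm_num at this
      exact this)
  exact ⟨key.1, by rw [key.2]; norm_num⟩




lemma B_pos {l μ : ℝ} (hl : 0 ≤ l) (hl1 : l ≤ 1) (hμ : -1 < μ) : 0 < 1 + l * μ := by
  rcases le_or_gt 0 μ with h | h
  · nlinarith
  · nlinarith [mul_nonneg (sub_nonneg.mpr hl1) (neg_nonneg.mpr h.le)]

lemma mass_eq (l : ℝ) (hl : 0 ≤ l) (hl1 : l ≤ 1) (μ : ℝ) (hμ : -1 < μ) :
    M l μ = (6/5) * ((1+μ) * Real.sqrt (1+μ)) * (Real.sqrt (1+l*μ))⁻¹ * (5 + l*(1+6*μ)) := by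
  have hA : (0:ℝ) < 1 + μ := by linarith
  have hB : (0:ℝ) < 1 + l * μ := B_pos hl hl1 hμ
  set c := Real.sqrt ((1+μ)/(1+l*μ)) with hcdef
  have hc : 0 < c := Real.sqrt_pos.mpr (div_pos hA hB)
  have hderiv : ∀ x, deriv (Qmu l μ) x = (1+μ) * (Q' (c*x) * c) := by
    intro x
    have h1 : HasDerivAt (fun y : ℝ => c * y) c x := by
      simpa using (hasDerivAt_id x).const_mul c
    have h2 := ((hasDerivAt_Q (c*x)).comp x h1).const_mul (1+μ)
    have h3 : Qmu l μ = fun x => (1+μ) * Q (c*x) := by funext y; rfl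
    rw [h3]
    exact h2.deriv
  have hfun : (fun x => l * (deriv (Qmu l μ) x)^2 + (Qmu l μ x)^2)
      = fun x => (l * ((1+μ)*c)^2) * (Q' (c*x))^2 + ((1+μ)^2) * (Q (c*x))^2 := by
    funext x; rw [hderiv x]; simp only [Qmu]; ring
  have hi1 : Integrable (fun x => (Q' (c*x))^2) := Q'_sq_integral.1.comp_mul_left' hc.ne'
  have hi2 : Integrable (fun x => (Q (c*x))^2) := Q_sq_integral.1.comp_mul_left' hc.ne'
  have e1 : (∫ x, (Q' (c*x))^2) = c⁻¹ * (6/5) := by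
    rw [Measure.integral_comp_mul_left (fun y => (Q' y)^2) c,
      abs_of_pos (inv_pos.mpr hc), smul_eq_mul, Q'_sq_integral.2]
  have e2 : (∫ x, (Q (c*x))^2) = c⁻¹ * 6 := by
    rw [Measure.integral_comp_mul_left (fun y => (Q y)^2) c,
      abs_of_pos (inv_pos.mpr hc), smul_eq_mul, Q_sq_integral.2]
  unfold M
  rw [hfun, integral_add (hi1.const_mul _) (hi2.const_mul _),
    integral_const_mul, integral_const_mul, e1, e2]
  have hc2 : c = Real.sqrt (1+μ) / Real.sqrt (1+l*μ) := Real.sqrt_div hA.le _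
  have h5 : 5 + l*(1+6*μ) = l*(1+μ) + 5*(1+l*μ) := by ring
  rw [hc2, h5]
  set sa := Real.sqrt (1+μ) with hsaeq
  set sb := Real.sqrt (1+l*μ) with hsbeq
  have hA2 : sa ^ 2 = 1+μ := Real.sq_sqrt hA.le
  have hB2 : sb ^ 2 = 1+l*μ := Real.sq_sqrt hB.le
  have hsa : 0 < sa := Real.sqrt_pos.mpr hA
  have hsb : 0 < sb := Real.sqrt_pos.mpr hB
  rw [← hA2, ← hB2]
  field_simp

lemma mass_eq_rpow (l : ℝ) (hl : 0 ≤ l) (hl1 : l ≤ 1) (μ : ℝ) (hμ : -1 < μ) :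
    M l μ = (6/5) * (1+μ) ^ ((3:ℝ)/2) * (1+l*μ) ^ (-(1:ℝ)/2) * (5 + l*(1+6*μ)) := by
  have hA : (0:ℝ) < 1 + μ := by linarith
  have hB : (0:ℝ) < 1 + l * μ := B_pos hl hl1 hμ
  rw [mass_eq l hl hl1 μ hμ]
  rw [show (3:ℝ)/2 = 1 + 1/2 by norm_num, Real.rpow_add hA, Real.rpow_one,
    ← Real.sqrt_eq_rpow, show -(1:ℝ)/2 = -(1/2) by norm_num, Real.rpow_neg hB.le,
    ← Real.sqrt_eq_rpow]

lemma hasDerivAt_F (l μ : ℝ) (hA : (0:ℝ) < 1 + μ) (hB : (0:ℝ) < 1 + l * μ) :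
    HasDerivAt (fun μ => (6/5) * (1+μ) ^ ((3:ℝ)/2) * (1+l*μ) ^ (-(1:ℝ)/2) * (5 + l*(1+6*μ)))
      (((6/5 * ((3/2) * (1+μ)^((1:ℝ)/2))) * ((1+l*μ) ^ (-(1:ℝ)/2))
          + (6/5 * ((1+μ) ^ ((3:ℝ)/2))) * ((-(1:ℝ)/2) * (1+l*μ)^(-(3:ℝ)/2) * l)) * (5 + l*(1+6*μ))
        + ((6/5 * (1+μ) ^ ((3:ℝ)/2)) * ((1+l*μ) ^ (-(1:ℝ)/2))) * (l*6)) μ := by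
  have hv : HasDerivAt (fun μ : ℝ => (1+μ) ^ ((3:ℝ)/2)) ((3/2) * (1+μ)^((1:ℝ)/2)) μ := by
    have h0 : HasDerivAt (fun μ : ℝ => 1+μ) 1 μ := (hasDerivAt_id μ).const_add 1
    have h := (Real.hasDerivAt_rpow_const (x := 1+μ) (p := (3:ℝ)/2) (Or.inl hA.ne')).comp μ h0
    convert h using 1 <;> try rfl
    rw [show (3:ℝ)/2 - 1 = 1/2 by norm_num]
    simp
  have hw : HasDerivAt (fun μ : ℝ => (1+l*μ) ^ (-(1:ℝ)/2))
      ((-(1:ℝ)/2) * (1+l*μ)^(-(3:ℝ)/2) * l) μ := by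
    have h0 : HasDerivAt (fun μ : ℝ => 1+l*μ) l μ := by
      simpa using ((hasDerivAt_id μ).const_mul l).const_add 1
    have h := (Real.hasDerivAt_rpow_const (x := 1+l*μ) (p := -(1:ℝ)/2) (Or.inl hB.ne')).comp μ h0
    convert h using 1 <;> try rfl
    rw [show -(1:ℝ)/2 - 1 = -(3:ℝ)/2 by norm_num]
  have hu : HasDerivAt (fun μ : ℝ => 5 + l*(1+6*μ)) (l*6) μ := by
    have h6 : HasDerivAt (fun μ : ℝ => 6*μ) 6 μ := by simpa using (hasDerivAt_id μ).const_mul 6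
    have h8 : HasDerivAt (fun μ : ℝ => l*(1+6*μ)) (l*6) μ := (h6.const_add 1).const_mul l
    exact h8.const_add 5
  exact ((hv.const_mul (6/5)).mul hw).mul hu


end MassAux

open MassAux in
theorem mass_formula_and_monotonicity (l : ℝ) (hl : 0 ≤ l) (hl1 : l < 1) :
    ∀ μ : ℝ, -1 < μ →
      M l μ = (1/5) * (∫ x : ℝ, (Q x)^2) * (1 + μ) ^ ((3:ℝ)/2)
                * (1 + l * μ) ^ (-(1:ℝ)/2) * (5 + l * (1 + 6 * μ)) ∧
      deriv (M l) μ = (1/10) * (∫ x : ℝ, (Q x)^2) * (1 + μ) ^ ((1:ℝ)/2)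
                * (1 + l * μ) ^ (-(3:ℝ)/2)
                * (15 * (1 - l)^2 + 8 * l * (1 + μ) * (5 * (1 - l) + 3 * l * (1 + μ))) ∧
      0 < deriv (M l) μ := by
  intro μ hμ
  have hA : (0:ℝ) < 1 + μ := by linarith
  have hB : (0:ℝ) < 1 + l * μ := B_pos hl hl1.le hμ
  rw [Q_sq_integral.2]
  have hder : deriv (M l) μ = (1/10) * 6 * (1 + μ) ^ ((1:ℝ)/2) * (1 + l * μ) ^ (-(3:ℝ)/2)
      * (15 * (1 - l)^2 + 8 * l * (1 + μ) * (5 * (1 - l) + 3 * l * (1 + μ))) := by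
    have hev : M l =ᶠ[𝓝 μ] fun μ =>
        (6/5) * (1+μ) ^ ((3:ℝ)/2) * (1+l*μ) ^ (-(1:ℝ)/2) * (5 + l*(1+6*μ)) := by
      filter_upwards [Ioi_mem_nhds hμ] with ν hν using mass_eq_rpow l hl hl1.le ν hν
    rw [hev.deriv_eq, (hasDerivAt_F l μ hA hB).deriv]
    have hV : (1+μ) ^ ((3:ℝ)/2) = (1+μ) * (1+μ) ^ ((1:ℝ)/2) := by
      rw [show (3:ℝ)/2 = 1 + 1/2 by norm_num, Real.rpow_add hA, Real.rpow_one]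
    have hW : (1+l*μ) ^ (-(1:ℝ)/2) = (1+l*μ) * (1+l*μ) ^ (-(3:ℝ)/2) := by
      rw [show -(1:ℝ)/2 = 1 + -(3:ℝ)/2 by norm_num, Real.rpow_add hB, Real.rpow_one]
    rw [hV, hW]
    ring
  refine ⟨?_, ?_, ?_⟩
  · rw [mass_eq_rpow l hl hl1.le μ hμ]; ring
  · rw [hder]
  · rw [hder]
    have hP : 0 < (1 + μ) ^ ((1:ℝ)/2) := Real.rpow_pos_of_pos hA _
    have hR : 0 < (1 + l * μ) ^ (-(3:ℝ)/2) := Real.rpow_pos_of_pos hB _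
    have hBig : 0 < 15 * (1 - l)^2 + 8 * l * (1 + μ) * (5 * (1 - l) + 3 * l * (1 + μ)) := by
      have h1 : (0:ℝ) < (1 - l)^2 := pow_pos (sub_pos.mpr hl1) 2
      have h2 : (0:ℝ) ≤ 8 * l * (1 + μ) * (5 * (1 - l) + 3 * l * (1 + μ)) := by
        apply mul_nonneg (by positivity)
        nlinarith [mul_nonneg hl hA.le]
      nlinarith
    exact mul_pos (mul_pos (mul_pos (mul_pos (by norm_num : (0:ℝ) < 1/10)
      (by norm_num : (0:ℝ) < 6)) hP) hR) hBig
end
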